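/- Let R be a noetherian local ring with maximal ideal m, M a finitely generated R-module, and N ⊆ M a submodule. Elements m₁,…,m_t generating N form a standard basis for N (i.e. the initial forms in(m₁),…,in(m_t) generate the associated graded submodule G(m, N ⊆ M) = ⊕_{i≥0} (mⁱM ∩ N + mⁱ⁺¹M)/mⁱ⁺¹M inside G(m,M)) if and only if for every z ∈ N there exist a₁,…,a_t ∈ R with z = a₁m₁ + ⋯ + a_t m_t and ord(z) ≤ ord(a_i) + ord(m_i) for all i (where ord denotes the m-adic order). -/

import Mathlib

open IsLocalRing Submodule

/-- The `m`-adic order `ord(m, M)(z) = sup {n : z ∈ mⁿM}` (valued in `ℕ∞`). -/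
noncomputable def mord (R : Type*) {M : Type*} [CommRing R] [IsLocalRing R]
    [AddCommGroup M] [Module R M] (z : M) : ℕ∞ :=
  sSup ((fun n : ℕ => (n : ℕ∞)) ''
    {n : ℕ | z ∈ (maximalIdeal R) ^ n • (⊤ : Submodule R M)})

lemma mord_ge_iff {R M : Type*} [CommRing R] [IsLocalRing R]
    [AddCommGroup M] [Module R M] (z : M) (n : ℕ) :
    (n : ℕ∞) ≤ mord R z ↔ z ∈ (maximalIdeal R) ^ n • (⊤ : Submodule R M) := by
  constructor
  · intro h
    by_contra hz
    have hb : ∀ k ∈ {k : ℕ | z ∈ (maximalIdeal R) ^ k • (⊤ : Submodule R M)}, k < n := by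
      intro k hk
      by_contra hkn
      push_neg at hkn
      exact hz (Submodule.smul_mono_left (Ideal.pow_le_pow_right hkn) hk)
    cases n with
    | zero =>
      exact hz (by simp)
    | succ m =>
      have hle : mord R z ≤ (m : ℕ∞) := by
        apply sSup_le
        rintro x ⟨k, hk, rfl⟩
        exact Nat.cast_le.mpr (Nat.lt_succ_iff.mp (hb k hk))
      have : ((m + 1 : ℕ) : ℕ∞) ≤ (m : ℕ∞) := le_trans h hle
      exact absurd (by exact_mod_cast this) (Nat.not_succ_le_self m)
  · intro h
    exact le_sSup ⟨n, h, rfl⟩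

lemma mord_ge_iff_ideal {R : Type*} [CommRing R] [IsLocalRing R] (a : R) (n : ℕ) :
    (n : ℕ∞) ≤ mord R a ↔ a ∈ (maximalIdeal R) ^ n := by
  have h : (maximalIdeal R) ^ n • (⊤ : Submodule R R) = (maximalIdeal R) ^ n := by simp
  rw [mord_ge_iff, h]

lemma mord_eq_top_iff {R M : Type*} [CommRing R] [IsLocalRing R]
    [AddCommGroup M] [Module R M] (z : M) :
    mord R z = ⊤ ↔ ∀ n : ℕ, z ∈ (maximalIdeal R) ^ n • (⊤ : Submodule R M) := by
  constructor
  · intro h n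
    exact (mord_ge_iff z n).mp (h ▸ le_top)
  · intro h
    by_contra hne
    obtain ⟨m, hm⟩ : ∃ m : ℕ, mord R z = (m : ℕ∞) := by
      cases hx : mord R z with
      | top => exact absurd hx hne
      | coe m => exact ⟨m, rfl⟩
    have := (mord_ge_iff z (m + 1)).mpr (h (m + 1))
    rw [hm] at this
    exact absurd (by exact_mod_cast this) (Nat.not_succ_le_self m)

lemma mord_top_imp_zero {R M : Type*} [CommRing R] [IsNoetherianRing R] [IsLocalRing R]
    [AddCommGroup M] [Module R M] [Module.Finite R M] {z : M}
    (h : mord R z = ⊤) : z = 0 := by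
  obtain ⟨s, π, hπ⟩ := Module.Finite.exists_fin' R M
  let e := LinearMap.quotKerEquivOfSurjective π hπ
  set y := e.symm z with hy
  have hyn : ∀ n : ℕ, y ∈
      (maximalIdeal R) ^ n • (⊤ : Submodule R ((Fin s → R) ⧸ LinearMap.ker π)) := by
    intro n
    have hz := (mord_eq_top_iff z).mp h n
    have hmap := Submodule.map_smul'' ((maximalIdeal R) ^ n) (⊤ : Submodule R M)
      (e.symm : M →ₗ[R] ((Fin s → R) ⧸ LinearMap.ker π))
    have htop : Submodule.map
        (e.symm : M →ₗ[R] ((Fin s → R) ⧸ LinearMap.ker π)) ⊤ = ⊤ := by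
      rw [Submodule.map_top, LinearEquiv.range]
    rw [htop] at hmap
    rw [← hmap]
    exact Submodule.mem_map_of_mem hz
  have hmem : y ∈ (⨅ i : ℕ,
      (maximalIdeal R) ^ i • ⊤ : Submodule R ((Fin s → R) ⧸ LinearMap.ker π)) :=
    Submodule.mem_iInf _ |>.mpr hyn
  have hbot := Ideal.iInf_pow_smul_eq_bot_of_isLocalRing (I := maximalIdeal R)
    (M := (Fin s → R) ⧸ LinearMap.ker π)
    (Ideal.IsMaximal.ne_top (maximalIdeal.isMaximal R))
  rw [hbot, Submodule.mem_bot] at hmem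
  have : z = e y := by rw [hy, LinearEquiv.apply_symm_apply]
  rw [this, hmem, map_zero]

/-- for a noetherian local ring `(R, m)`, a finitely generated module `M`, a
submodule `N ⊆ M` and generators `v 1, …, v t` of `N` with `d i = ord(v i)`, the family `v`
is a standard basis for `N` — i.e. the initial forms `in(v i)` generate the graded submodule
`G(m, N ⊆ M) = ⊕ (mⁿM ∩ N + mⁿ⁺¹M)/mⁿ⁺¹M` of `G(m, M)`, which amounts to: every
`z ∈ mⁿM ∩ N` is congruent mod `mⁿ⁺¹M` to a combination `Σ aᵢ • vᵢ` with `aᵢ ∈ m^(n - dᵢ)` —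
if and only if every `z ∈ N` can be written `z = Σ aᵢ • vᵢ` with
`ord z ≤ ord aᵢ + ord vᵢ` for all `i`. -/
theorem standard_basis_criterion
    {R M : Type*} [CommRing R] [IsNoetherianRing R] [IsLocalRing R]
    [AddCommGroup M] [Module R M] [Module.Finite R M]
    (N : Submodule R M) {t : ℕ} (v : Fin t → M)
    (hvN : ∀ i, v i ∈ N)
    (hgen : Submodule.span R (Set.range v) = N)
    (d : Fin t → ℕ) (hd : ∀ i, (d i : ℕ∞) = mord R (v i)) :
    (∀ n : ℕ, ∀ z ∈ ((maximalIdeal R) ^ n • (⊤ : Submodule R M)) ⊓ N,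
        ∃ a : Fin t → R, (∀ i, a i ∈ (maximalIdeal R) ^ (n - d i)) ∧
          z - ∑ i, a i • v i ∈ (maximalIdeal R) ^ (n + 1) • (⊤ : Submodule R M))
      ↔ (∀ z ∈ N, ∃ a : Fin t → R, z = ∑ i, a i • v i ∧
          ∀ i, mord R z ≤ mord R (a i) + mord R (v i)) := by
  constructor
  · intro H z hzN
    cases hmz : mord R z with
    | top =>
      have hz0 : z = 0 := mord_top_imp_zero hmz
      refine ⟨0, by simp [hz0], fun i => ?_⟩
      have h0 : mord R (0 : R) = ⊤ := (mord_eq_top_iff (0 : R)).mpr fun n => Submodule.zero_mem _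
      simp only [Pi.zero_apply, h0, top_add]
      exact le_top
    | coe n =>
      have hzn : z ∈ (maximalIdeal R) ^ n • (⊤ : Submodule R M) :=
        (mord_ge_iff z n).mp (le_of_eq hmz.symm)
      set P : Submodule R M :=
        ⨆ i, (maximalIdeal R ^ (n - d i)) • (Submodule.span R {v i}) with hP
      -- key approximation claim
      have key : ∀ k : ℕ, ∃ p ∈ P,
          z - p ∈ ((maximalIdeal R) ^ (n + k) • (⊤ : Submodule R M)) ⊓ N := by
        intro k
        induction k with
        | zero => exact ⟨0, Submodule.zero_mem _, by simpa using ⟨hzn, hzN⟩⟩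
        | succ k ih =>
          obtain ⟨p, hp, hw1, hw2⟩ := ih
          obtain ⟨a, ha, hrem⟩ := H (n + k) (z - p) ⟨hw1, hw2⟩
          refine ⟨p + ∑ i, a i • v i, ?_, ?_, ?_⟩
          · refine Submodule.add_mem _ hp (Submodule.sum_mem _ fun i _ => ?_)
            refine Submodule.mem_iSup_of_mem i ?_
            refine Submodule.mem_smul_span_singleton.mpr ⟨a i, ?_, rfl⟩
            exact Ideal.pow_le_pow_right (Nat.sub_le_sub_right (Nat.le_add_right n k) _) (ha i)
          · have heq : z - (p + ∑ i, a i • v i) = (z - p) - ∑ i, a i • v i := by abel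
            rw [heq]
            exact hrem
          · have : z - (p + ∑ i, a i • v i) = (z - p) - ∑ i, a i • v i := by abel
            rw [this]
            exact Submodule.sub_mem _ hw2
              (Submodule.sum_mem _ fun i _ => Submodule.smul_mem _ _ (hvN i))
      -- pass to the quotient M ⧸ P and use Krull intersection
      have hq : mord R (Submodule.Quotient.mk (p := P) z) = ⊤ := by
        rw [mord_eq_top_iff]
        intro k
        obtain ⟨p, hp, hw1, _⟩ := key k
        have hmap : (Submodule.Quotient.mk (p := P) (z - p)) ∈
            (maximalIdeal R) ^ (n + k) • (⊤ : Submodule R (M ⧸ P)) := by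
          have := Submodule.map_smul'' ((maximalIdeal R) ^ (n + k))
            (⊤ : Submodule R M) P.mkQ
          rw [Submodule.map_top, Submodule.range_mkQ] at this
          rw [← this]
          exact Submodule.mem_map_of_mem hw1
        have heq : (Submodule.Quotient.mk (p := P) (z - p)) =
            Submodule.Quotient.mk (p := P) z := by
          rw [Submodule.Quotient.mk_sub, (Submodule.Quotient.mk_eq_zero P).mpr hp, sub_zero]
        rw [heq] at hmap
        exact Submodule.smul_mono_left
          (Ideal.pow_le_pow_right (Nat.le_add_left k n)) hmap
      have hzP : z ∈ P := by
        have := mord_top_imp_zero hq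
        rwa [Submodule.Quotient.mk_eq_zero] at this
      -- extract coefficients
      rw [hP, Submodule.mem_iSup_iff_exists_finsupp] at hzP
      obtain ⟨f, hf, hfsum⟩ := hzP
      choose a haI hav using fun i => Submodule.mem_smul_span_singleton.mp (hf i)
      refine ⟨a, ?_, fun i => ?_⟩
      · have : z = ∑ i, f i := by
          rw [← hfsum, Finsupp.sum_fintype]
          intro i; rfl
        rw [this]
        exact Finset.sum_congr rfl fun i _ => (hav i).symm
      · have h1 : ((n - d i : ℕ) : ℕ∞) ≤ mord R (a i) :=
          (mord_ge_iff_ideal (a i) _).mpr (haI i)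
        rw [← hd i]
        calc (n : ℕ∞) ≤ ((n - d i : ℕ) : ℕ∞) + (d i : ℕ∞) := by
              exact_mod_cast le_tsub_add
          _ ≤ mord R (a i) + (d i : ℕ∞) := add_le_add h1 le_rfl
  · intro H n z hz
    obtain ⟨hz1, hz2⟩ := hz
    obtain ⟨a, hzeq, hord⟩ := H z hz2
    refine ⟨a, fun i => ?_, by rw [hzeq, sub_self]; exact Submodule.zero_mem _⟩
    rw [← mord_ge_iff_ideal]
    have hn : (n : ℕ∞) ≤ mord R z := (mord_ge_iff z n).mpr hz1
    have := le_trans hn (hord i)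
    rw [← hd i] at this
    rw [ENat.coe_sub]
    exact tsub_le_iff_right.mpr this
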